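/- Let g : ℝᵐ → ℝ ∪ {+∞} be Lipschitz continuous around F(x̄) relative to its domain, let F : ℝⁿ → ℝᵐ be semi-differentiable at x̄ for the direction w, suppose f := g ∘ F is finite at x̄, and assume the directional metric subregularity qualification condition holds for f = g ∘ F at x̄ in direction w. Then the exact subderivative chain rule holds: df(x̄)(w) = dg(F(x̄))(dF(x̄)(w)). -/

import Mathlib

open Filter Topology Set

/-- The subderivative `df(x̄)(w) := liminf_{t↓0, w'→w} (f(x̄ + t w') − f(x̄))/t`
of an extended-real-valued function. -/
noncomputable def subderiv {n : ℕ} (f : EuclideanSpace ℝ (Fin n) → EReal)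
    (x w : EuclideanSpace ℝ (Fin n)) : EReal :=
  Filter.liminf
    (fun p : ℝ × EuclideanSpace ℝ (Fin n) =>
      (((p.1)⁻¹ : ℝ) : EReal) * (f (x + p.1 • p.2) - f x))
    ((𝓝[>] (0:ℝ)) ×ˢ 𝓝 w)

/-- `F` is semi-differentiable at `x` for the direction `w` with semi-derivative `d`:
`d = lim_{t↓0, w'→w} (F(x + t w') − F(x))/t`. -/
def HasSemiderivAt {E V : Type*} [NormedAddCommGroup E] [NormedSpace ℝ E]
    [NormedAddCommGroup V] [NormedSpace ℝ V]
    (F : E → V) (x w : E) (d : V) : Prop :=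
  Filter.Tendsto (fun p : ℝ × E => (p.1)⁻¹ • (F (x + p.1 • p.2) - F x))
    ((𝓝[>] (0:ℝ)) ×ˢ 𝓝 w) (𝓝 d)

set_option maxHeartbeats 1000000

/-- exact subderivative chain rule for `f = g ∘ F` under relative Lipschitz
continuity of `g`, semi-differentiability of `F` at `x̄` for `w`, and the directional
metric subregularity qualification condition at `x̄` in direction `w`. -/
theorem subderivative_chain_rule {n m : ℕ}
    (g : EuclideanSpace ℝ (Fin m) → EReal)
    (F : EuclideanSpace ℝ (Fin n) → EuclideanSpace ℝ (Fin m))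
    (x w : EuclideanSpace ℝ (Fin n)) (dFw : EuclideanSpace ℝ (Fin m))
    -- `g` takes values in ℝ ∪ {+∞}
    (hg_ne_bot : ∀ y, g y ≠ ⊥)
    -- `f = g ∘ F` is finite at `x̄`
    (hfin : g (F x) ≠ ⊤)
    -- `g` is Lipschitz continuous around `F x̄` relative to its domain
    (hLip : ∃ ℓ : ℝ, 0 ≤ ℓ ∧ ∃ U ∈ 𝓝 (F x), ∀ y ∈ {y | g y ≠ ⊤} ∩ U,
      ∀ u ∈ {y | g y ≠ ⊤} ∩ U, |(g y).toReal - (g u).toReal| ≤ ℓ * ‖y - u‖)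
    -- `F` is semi-differentiable at `x̄` for the direction `w`, with semi-derivative `dFw`
    (hF : HasSemiderivAt F x w dFw)
    -- directional metric subregularity qualification condition at `x̄` in direction `w`
    (hMSQC : ∃ κ > (0:ℝ), ∃ ε > (0:ℝ), ∀ t ∈ Set.Icc (0:ℝ) ε,
      Metric.infDist (x + t • w) {z | g (F z) ≠ ⊤} ≤
        κ * Metric.infDist (F (x + t • w)) {y | g y ≠ ⊤}) :
    subderiv (fun z => g (F z)) x w = subderiv g (F x) dFw := by
  classical
  obtain ⟨ℓ, hℓ0, U, hU, hLipU⟩ := hLip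
  obtain ⟨κ, hκ, ε, hε, hsub⟩ := hMSQC
  set L : Filter (ℝ × EuclideanSpace ℝ (Fin n)) := (𝓝[>] (0:ℝ)) ×ˢ 𝓝 w with hLdef
  set L' : Filter (ℝ × EuclideanSpace ℝ (Fin m)) := (𝓝[>] (0:ℝ)) ×ˢ 𝓝 dFw with hL'def
  set uf : ℝ × EuclideanSpace ℝ (Fin n) → EReal :=
    fun p => (((p.1)⁻¹ : ℝ) : EReal) * (g (F (x + p.1 • p.2)) - g (F x)) with hufdef
  set ug : ℝ × EuclideanSpace ℝ (Fin m) → EReal :=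
    fun p => (((p.1)⁻¹ : ℝ) : EReal) * (g (F x + p.1 • p.2) - g (F x)) with hugdef
  have hsf : subderiv (fun z => g (F z)) x w = liminf uf L := rfl
  have hsg : subderiv g (F x) dFw = liminf ug L' := rfl
  have hIoc : Set.Ioc (0:ℝ) ε ∈ 𝓝[>] (0:ℝ) := Ioc_mem_nhdsGT_of_mem ⟨le_rfl, hε⟩
  have hposL : ∀ᶠ p in L, p.1 ∈ Set.Ioc (0:ℝ) ε :=
    Filter.eventually_of_mem (prod_mem_prod hIoc univ_mem) fun p hp => hp.1
  have hposL' : ∀ᶠ p in L', p.1 ∈ Set.Ioc (0:ℝ) ε :=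
    Filter.eventually_of_mem (prod_mem_prod hIoc univ_mem) fun p hp => hp.1
  -- ====== easy direction ======
  have hEasy : subderiv g (F x) dFw ≤ subderiv (fun z => g (F z)) x w := by
    have hΦ : Tendsto (fun p : ℝ × EuclideanSpace ℝ (Fin n) =>
        (p.1, (p.1)⁻¹ • (F (x + p.1 • p.2) - F x))) L L' := tendsto_fst.prodMk hF
    have h1 : liminf ug L' ≤
        liminf (ug ∘ fun p : ℝ × EuclideanSpace ℝ (Fin n) =>
          (p.1, (p.1)⁻¹ • (F (x + p.1 • p.2) - F x))) L := by
      rw [liminf_comp]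
      exact liminf_le_liminf_of_le hΦ
    rw [hsf, hsg]
    refine h1.trans (le_of_eq (liminf_congr ?_))
    filter_upwards [hposL] with p hp
    have h2 : F x + p.1 • ((p.1)⁻¹ • (F (x + p.1 • p.2) - F x)) = F (x + p.1 • p.2) := by
      rw [smul_inv_smul₀ hp.1.ne']; abel
    simp only [Function.comp, ug, uf, h2]
  -- ====== hard direction ======
  have hne : {z | g (F z) ≠ ⊤}.Nonempty := ⟨x, hfin⟩
  have key : ∀ t : ℝ, 0 < t → ∃ z' ∈ {z | g (F z) ≠ ⊤},
      dist (x + t • w) z' < Metric.infDist (x + t • w) {z | g (F z) ≠ ⊤} + t * t := by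
    intro t ht
    exact (Metric.infDist_lt_iff hne).mp (lt_add_of_pos_right _ (mul_pos ht ht))
  choose! z hz1 hz2 using key
  set ψ : ℝ × EuclideanSpace ℝ (Fin m) → EuclideanSpace ℝ (Fin n) :=
    fun p => if g (F x + p.1 • p.2) = ⊤ then w else (p.1)⁻¹ • (z p.1 - x) with hψdef
  have hxψ : ∀ p : ℝ × EuclideanSpace ℝ (Fin m), 0 < p.1 → g (F x + p.1 • p.2) ≠ ⊤ →
      x + p.1 • ψ p = z p.1 := by
    intro p hp hT
    simp only [ψ, if_neg hT, smul_inv_smul₀ hp.ne']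
    abel
  have hv : Tendsto (fun t : ℝ => t⁻¹ • (F (x + t • w) - F x)) (𝓝[>] (0:ℝ)) (𝓝 dFw) :=
    hF.comp (tendsto_id.prodMk tendsto_const_nhds)
  have hψbound : ∀ᶠ p in L',
      ‖ψ p - w‖ ≤ κ * ‖(p.1)⁻¹ • (F (x + p.1 • w) - F x) - p.2‖ + p.1 := by
    filter_upwards [hposL'] with p hp
    have ht : (0:ℝ) < p.1 := hp.1
    by_cases hT : g (F x + p.1 • p.2) = ⊤
    · simp only [ψ, if_pos hT, sub_self, norm_zero]
      have : 0 ≤ κ * ‖(p.1)⁻¹ • (F (x + p.1 • w) - F x) - p.2‖ :=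
        mul_nonneg hκ.le (norm_nonneg _)
      linarith
    · simp only [ψ, if_neg hT]
      have htne : p.1 ≠ 0 := ht.ne'
      set t := p.1
      have h1 : t⁻¹ • (z t - x) - w = t⁻¹ • (z t - (x + t • w)) := by
        rw [smul_sub t⁻¹ (z t) (x + t • w), smul_add, inv_smul_smul₀ htne, smul_sub]
        abel
      rw [h1, norm_smul, norm_inv, Real.norm_eq_abs, abs_of_pos ht]
      have h2 : ‖z t - (x + t • w)‖ = dist (x + t • w) (z t) := by
        rw [dist_comm, dist_eq_norm]
      have h3 := hz2 t ht
      have h4 := hsub t ⟨ht.le, hp.2⟩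
      have h5 : Metric.infDist (F (x + t • w)) {y' | g y' ≠ ⊤} ≤
          dist (F (x + t • w)) (F x + t • p.2) := Metric.infDist_le_dist_of_mem hT
      set N := ‖t⁻¹ • (F (x + t • w) - F x) - p.2‖ with hNdef
      have h6 : dist (F (x + t • w)) (F x + t • p.2) = t * N := by
        rw [dist_eq_norm, hNdef,
          show F (x + t • w) - (F x + t • p.2) = t • (t⁻¹ • (F (x + t • w) - F x) - p.2) by
            rw [smul_sub, smul_inv_smul₀ htne]; abel,
          norm_smul, Real.norm_eq_abs, abs_of_pos ht]
      have hN : 0 ≤ N := norm_nonneg _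
      rw [h2]
      have h7 : dist (x + t • w) (z t) ≤ κ * (t * N) + t * t := by
        have := h3.le
        nlinarith [h4, h5, h6]
      calc t⁻¹ * dist (x + t • w) (z t) ≤ t⁻¹ * (κ * (t * N) + t * t) :=
            mul_le_mul_of_nonneg_left h7 (inv_nonneg.mpr ht.le)
        _ = κ * N + t := by field_simp
  have hψt : Tendsto ψ L' (𝓝 w) := by
    rw [← tendsto_sub_nhds_zero_iff]
    rw [tendsto_zero_iff_norm_tendsto_zero]
    apply squeeze_zero' (Filter.Eventually.of_forall fun p => norm_nonneg _) hψbound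
    have hA : Tendsto (fun p : ℝ × EuclideanSpace ℝ (Fin m) =>
        ‖(p.1)⁻¹ • (F (x + p.1 • w) - F x) - p.2‖) L' (𝓝 0) := by
      have h1 : Tendsto (fun p : ℝ × EuclideanSpace ℝ (Fin m) =>
          (p.1)⁻¹ • (F (x + p.1 • w) - F x) - p.2) L' (𝓝 (dFw - dFw)) :=
        (hv.comp tendsto_fst).sub tendsto_snd
      simpa [sub_self] using h1.norm
    have hB : Tendsto (fun p : ℝ × EuclideanSpace ℝ (Fin m) => p.1) L' (𝓝 0) :=
      tendsto_fst.mono_right nhdsWithin_le_nhds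
    simpa using (hA.const_mul κ).add hB
  have hΨ : Tendsto (fun p : ℝ × EuclideanSpace ℝ (Fin m) => (p.1, ψ p)) L' L :=
    tendsto_fst.prodMk hψt
  have hq : Tendsto (fun p : ℝ × EuclideanSpace ℝ (Fin m) =>
      (p.1)⁻¹ • (F (x + p.1 • ψ p) - F x)) L' (𝓝 dFw) := hF.comp hΨ
  have hzeroL' : Tendsto (fun p : ℝ × EuclideanSpace ℝ (Fin m) => p.1) L' (𝓝 0) :=
    tendsto_fst.mono_right nhdsWithin_le_nhds
  have hFU : ∀ᶠ p in L', F (x + p.1 • ψ p) ∈ U := by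
    have h0 : Tendsto (fun p : ℝ × EuclideanSpace ℝ (Fin m) =>
        p.1 • ((p.1)⁻¹ • (F (x + p.1 • ψ p) - F x))) L' (𝓝 ((0:ℝ) • dFw)) :=
      hzeroL'.smul hq
    have h0' : Tendsto (fun p : ℝ × EuclideanSpace ℝ (Fin m) =>
        F (x + p.1 • ψ p) - F x) L' (𝓝 0) := by
      rw [show (0 : EuclideanSpace ℝ (Fin m)) = (0:ℝ) • dFw by simp]
      apply h0.congr'
      filter_upwards [hposL'] with p hp
      rw [smul_inv_smul₀ hp.1.ne']
    have h1 : Tendsto (fun p : ℝ × EuclideanSpace ℝ (Fin m) =>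
        F (x + p.1 • ψ p)) L' (𝓝 (F x)) := by
      have h2 := h0'.add (tendsto_const_nhds (x := F x))
      simpa using h2
    exact h1 hU
  have haU : ∀ᶠ p in L', F x + p.1 • p.2 ∈ U := by
    have h1 : Tendsto (fun p : ℝ × EuclideanSpace ℝ (Fin m) => F x + p.1 • p.2) L'
        (𝓝 (F x + (0:ℝ) • dFw)) := tendsto_const_nhds.add (hzeroL'.smul tendsto_snd)
    have h2 : Tendsto (fun p : ℝ × EuclideanSpace ℝ (Fin m) => F x + p.1 • p.2) L'
        (𝓝 (F x)) := by simpa using h1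
    exact h2 hU
  set err : ℝ × EuclideanSpace ℝ (Fin m) → ℝ :=
    fun p => ℓ * (‖(p.1)⁻¹ • (F (x + p.1 • ψ p) - F x) - dFw‖ + ‖dFw - p.2‖) with herrdef
  have herr0 : Tendsto err L' (𝓝 0) := by
    have h1 : Tendsto (fun p : ℝ × EuclideanSpace ℝ (Fin m) =>
        ‖(p.1)⁻¹ • (F (x + p.1 • ψ p) - F x) - dFw‖) L' (𝓝 0) := by
      simpa [sub_self] using (hq.sub (tendsto_const_nhds (x := dFw))).norm
    have hsnd : Tendsto (fun p : ℝ × EuclideanSpace ℝ (Fin m) => p.2) L' (𝓝 dFw) :=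
      tendsto_snd
    have h2 : Tendsto (fun p : ℝ × EuclideanSpace ℝ (Fin m) => ‖dFw - p.2‖) L' (𝓝 0) := by
      simpa [sub_self] using ((tendsto_const_nhds (x := dFw)).sub hsnd).norm
    simpa using ((h1.add h2).const_mul ℓ)
  have hmain : ∀ᶠ p in L', uf (p.1, ψ p) ≤ ((err p : ℝ) : EReal) + ug p := by
    filter_upwards [hposL', haU, hFU] with p hp hU1 hU2
    have ht : (0:ℝ) < p.1 := hp.1
    by_cases hT : g (F x + p.1 • p.2) = ⊤
    · obtain ⟨r, hr⟩ : ∃ r : ℝ, g (F x) = (r : EReal) :=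
        ⟨(g (F x)).toReal, (EReal.coe_toReal hfin (hg_ne_bot _)).symm⟩
      have hugtop : ug p = ⊤ := by
        simp only [ug, hT, hr]
        rw [EReal.top_sub_coe, EReal.coe_mul_top_of_pos (inv_pos.mpr ht)]
      rw [hugtop, EReal.coe_add_top]
      exact le_top
    · have hz' := hxψ p ht hT
      have hdomF : g (F (x + p.1 • ψ p)) ≠ ⊤ := by rw [hz']; exact hz1 p.1 ht
      set A := (g (F (x + p.1 • ψ p))).toReal with hA
      set C := (g (F x + p.1 • p.2)).toReal with hC
      set Y := (g (F x)).toReal with hY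
      have eA : g (F (x + p.1 • ψ p)) = (A : EReal) :=
        (EReal.coe_toReal hdomF (hg_ne_bot _)).symm
      have eC : g (F x + p.1 • p.2) = (C : EReal) :=
        (EReal.coe_toReal hT (hg_ne_bot _)).symm
      have eY : g (F x) = (Y : EReal) := (EReal.coe_toReal hfin (hg_ne_bot _)).symm
      have hLipAC : |A - C| ≤ ℓ * ‖F (x + p.1 • ψ p) - (F x + p.1 • p.2)‖ :=
        hLipU _ ⟨hdomF, hU2⟩ _ ⟨hT, hU1⟩
      have hnorm : ‖F (x + p.1 • ψ p) - (F x + p.1 • p.2)‖ ≤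
          p.1 * (‖(p.1)⁻¹ • (F (x + p.1 • ψ p) - F x) - dFw‖ + ‖dFw - p.2‖) := by
        have heq : F (x + p.1 • ψ p) - (F x + p.1 • p.2) =
            p.1 • (((p.1)⁻¹ • (F (x + p.1 • ψ p) - F x) - dFw) + (dFw - p.2)) := by
          have hcan := smul_inv_smul₀ ht.ne' (F (x + p.1 • ψ p) - F x)
          rw [smul_add, smul_sub p.1 ((p.1)⁻¹ • (F (x + p.1 • ψ p) - F x)) dFw, hcan,
            smul_sub p.1 dFw p.2]
          abel
        rw [heq, norm_smul, Real.norm_eq_abs, abs_of_pos ht]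
        exact mul_le_mul_of_nonneg_left (norm_add_le _ _) ht.le
      have h7 : A - C ≤ p.1 * err p := by
        calc A - C ≤ |A - C| := le_abs_self _
          _ ≤ ℓ * ‖F (x + p.1 • ψ p) - (F x + p.1 • p.2)‖ := hLipAC
          _ ≤ ℓ * (p.1 * (‖(p.1)⁻¹ • (F (x + p.1 • ψ p) - F x) - dFw‖ + ‖dFw - p.2‖)) :=
            mul_le_mul_of_nonneg_left hnorm hℓ0
          _ = p.1 * err p := by simp only [err]; ring
      have h8 : (p.1)⁻¹ * (A - C) ≤ (p.1)⁻¹ * (p.1 * err p) :=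
        mul_le_mul_of_nonneg_left h7 (inv_nonneg.mpr ht.le)
      rw [inv_mul_cancel_left₀ ht.ne'] at h8
      have hfinal : (p.1)⁻¹ * (A - Y) ≤ err p + (p.1)⁻¹ * (C - Y) := by
        have hexp : (p.1)⁻¹ * (A - Y) = (p.1)⁻¹ * (A - C) + (p.1)⁻¹ * (C - Y) := by ring
        linarith
      simp only [uf, ug, eA, eC, eY, ← EReal.coe_sub, ← EReal.coe_mul, ← EReal.coe_add]
      exact EReal.coe_le_coe_iff.mpr hfinal
  have hHard : subderiv (fun z => g (F z)) x w ≤ subderiv g (F x) dFw := by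
    rw [hsf, hsg]
    have s1 : liminf uf L ≤ liminf (fun p => uf (p.1, ψ p)) L' := by
      rw [show (fun p : ℝ × EuclideanSpace ℝ (Fin m) => uf (p.1, ψ p)) =
        uf ∘ (fun p => (p.1, ψ p)) from rfl, liminf_comp]
      exact liminf_le_liminf_of_le hΨ
    have s2 : liminf (fun p => uf (p.1, ψ p)) L' ≤
        liminf (fun p => ((err p : ℝ) : EReal) + ug p) L' := liminf_le_liminf hmain
    have herrE : limsup (fun p => ((err p : ℝ) : EReal)) L' = 0 := by
      have h1 : Tendsto (fun p => ((err p : ℝ) : EReal)) L' (𝓝 ((0:ℝ) : EReal)) :=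
        EReal.tendsto_coe.mpr herr0
      have : ((0:ℝ) : EReal) = (0 : EReal) := by norm_cast
      rw [this] at h1
      exact h1.limsup_eq
    have s3 : liminf (fun p => ((err p : ℝ) : EReal) + ug p) L' ≤
        limsup (fun p => ((err p : ℝ) : EReal)) L' + liminf ug L' := by
      apply EReal.liminf_add_le
      · left; rw [herrE]; simp
      · left; rw [herrE]; simp
    rw [herrE, zero_add] at s3
    exact (s1.trans s2).trans s3
  exact le_antisymm hHard hEasy
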